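/- arXiv:1404.1523 — 3 statements merged into one kernel-verified Lean document; each statement's English description precedes it below -/
import Mathlib

section
/- Let $q = 2^{2m+1}$, $m \geq 1$, $\pi(x) = x^{2^{m+1}}$ on $GF(q)$, and let $GF(s) \subseteq GF(q)$ be a subfield with $s = 2^{2p+1}$, $s^t = q$. If $c \in GF(q)$ satisfies $c + \pi(c) \in GF(s)$, then $c \in GF(s)$. -/
/-- For `q = 2^(2m+1)`, `π : x ↦ x^(2^(m+1))` and `GF(s) ⊆ GF(q)` a subfield with
    `s = 2^(2p+1)`, `s^t = q`: if `c + π c` lies in the subfield then so does `c`. -/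
theorem stmt3 (m p t : ℕ) (hm : 1 ≤ m) (ht : (2*p+1) * t = 2*m+1)
    (K : Subfield (GaloisField 2 (2*m+1))) (hK : Nat.card K = 2 ^ (2*p+1))
    (c : GaloisField 2 (2*m+1)) (hc : c + c ^ (2 ^ (m+1)) ∈ K) :
    c ∈ K := by
  classical
  haveI : Fintype (GaloisField 2 (2*m+1)) := Fintype.ofFinite _
  -- every element of F is fixed by x ↦ x^(2^(2m+1))
  have hq : ∀ x : GaloisField 2 (2*m+1), x ^ 2 ^ (2*m+1) = x := by
    intro x
    have hcard : Fintype.card (GaloisField 2 (2*m+1)) = 2 ^ (2*m+1) := by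
      rw [← Nat.card_eq_fintype_card]
      exact GaloisField.card 2 (2*m+1) (by omega)
    rw [← hcard]; exact FiniteField.pow_card x
  have hqj : ∀ (j : ℕ) (x : GaloisField 2 (2*m+1)), x ^ 2 ^ ((2*m+1)*j) = x := by
    intro j
    induction j with
    | zero => intro x; simp
    | succ j ih =>
      intro x
      have h1 : (2*m+1)*(j+1) = (2*m+1)*j + (2*m+1) := by ring
      rw [h1, pow_add, pow_mul, ih, hq]
  -- elements of K are fixed by x ↦ x^(2^(2p+1))
  haveI : Fintype K := Fintype.ofFinite K
  have hs : ∀ x ∈ K, x ^ 2 ^ (2*p+1) = x := by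
    intro x hx
    have h1 : Fintype.card K = 2 ^ (2*p+1) := by
      rw [← Nat.card_eq_fintype_card, hK]
    have h2 : (⟨x, hx⟩ : K) ^ Fintype.card K = ⟨x, hx⟩ := FiniteField.pow_card _
    rw [h1] at h2
    have h3 := congrArg (Subtype.val) h2
    push_cast at h3
    exact h3
  have char2 : ∀ x : GaloisField 2 (2*m+1), x + x = 0 := fun x => CharTwo.add_self_eq_zero x
  have hfrob : ∀ (k : ℕ) (x y : GaloisField 2 (2*m+1)),
      (x + y) ^ (2:ℕ) ^ k = x ^ (2:ℕ) ^ k + y ^ (2:ℕ) ^ k :=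
    fun k x y => add_pow_char_pow x y 2 k
  -- iterating π keeps c in the coset c + K
  have key : ∀ j : ℕ, ∃ b ∈ K, c ^ 2 ^ ((m+1)*j) = c + b := by
    intro j
    induction j with
    | zero => exact ⟨0, zero_mem K, by simp⟩
    | succ j ih =>
      obtain ⟨b, hb, heq⟩ := ih
      refine ⟨(c + c ^ 2 ^ (m+1)) + b ^ 2 ^ (m+1), add_mem hc (pow_mem hb _), ?_⟩
      have h1 : (m+1)*(j+1) = (m+1)*j + (m+1) := by ring
      rw [h1, pow_add, pow_mul, heq, hfrob]
      rw [show c + (c + c ^ 2 ^ (m+1) + b ^ 2 ^ (m+1))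
            = (c + c) + (c ^ 2 ^ (m+1) + b ^ 2 ^ (m+1)) from by ring,
        char2, zero_add]
  obtain ⟨b, hb, hcb⟩ := key (2*(2*p+1))
  have hcs : c ^ 2 ^ (2*p+1) = c + b := by
    have h1 : (m+1)*(2*(2*p+1)) = (2*m+1)*(2*p+1) + (2*p+1) := by ring
    rw [h1, pow_add, pow_mul, hqj] at hcb
    exact hcb
  have hbs : b ^ 2 ^ (2*p+1) = b := hs b hb
  have hdouble : ∀ r : ℕ, c ^ 2 ^ ((2*(2*p+1))*r) = c := by
    intro r
    induction r with
    | zero => simp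
    | succ r ih =>
      have h1 : (2*(2*p+1))*(r+1) = (2*(2*p+1))*r + ((2*p+1) + (2*p+1)) := by ring
      rw [h1, pow_add, pow_mul, ih, pow_add, pow_mul, hcs, hfrob, hcs, hbs,
        add_assoc, char2, add_zero]
  obtain ⟨r, hr⟩ : ∃ r, t = 2*r + 1 := by
    have hodd : Odd t := by
      have h1 : Odd ((2*p+1)*t) := by rw [ht]; exact ⟨m, by ring⟩
      exact (Nat.odd_mul.mp h1).2
    obtain ⟨r, hr⟩ := hodd
    exact ⟨r, by omega⟩
  have hb0 : b = 0 := by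
    have h1 : (2*m+1) = (2*(2*p+1))*r + (2*p+1) := by rw [← ht, hr]; ring
    have h2 : c ^ 2 ^ ((2*(2*p+1))*r + (2*p+1)) = c := by rw [← h1]; exact hq c
    rw [pow_add, pow_mul, hdouble, hcs] at h2
    exact add_eq_left.mp h2
  have hcfix : c ^ 2 ^ (2*p+1) = c := by rw [hcs, hb0, add_zero]
  -- counting argument: K is exactly the set of roots of X^(2^(2p+1)) - X
  set P : Polynomial (GaloisField 2 (2*m+1)) := Polynomial.X ^ 2 ^ (2*p+1) - Polynomial.X with hP
  have hdeg : P.natDegree = 2 ^ (2*p+1) := by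
    rw [hP, Polynomial.natDegree_sub_eq_left_of_natDegree_lt, Polynomial.natDegree_X_pow]
    rw [Polynomial.natDegree_X, Polynomial.natDegree_X_pow]
    exact Nat.one_lt_two_pow_iff.mpr (by omega)
  have hP0 : P ≠ 0 := by
    intro h
    rw [h, Polynomial.natDegree_zero] at hdeg
    exact (Nat.two_pow_pos (2*p+1)).ne' hdeg.symm
  have hroot : ∀ x : GaloisField 2 (2*m+1), x ^ 2 ^ (2*p+1) = x → x ∈ P.roots := by
    intro x hx
    rw [Polynomial.mem_roots hP0]
    simp [Polynomial.IsRoot, hP, hx]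
  have hsub : (K : Set (GaloisField 2 (2*m+1))).toFinset ⊆ P.roots.toFinset := by
    intro x hx
    rw [Set.mem_toFinset] at hx
    exact Multiset.mem_toFinset.mpr (hroot x (hs x hx))
  have hcardle : P.roots.toFinset.card ≤ (K : Set (GaloisField 2 (2*m+1))).toFinset.card := by
    calc P.roots.toFinset.card ≤ Multiset.card P.roots := Multiset.toFinset_card_le _
      _ ≤ P.natDegree := Polynomial.card_roots' P
      _ = 2 ^ (2*p+1) := hdeg
      _ = Nat.card K := hK.symm
      _ = (K : Set (GaloisField 2 (2*m+1))).toFinset.card := by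
          rw [Set.toFinset_card, Nat.card_eq_fintype_card]
          simp [SetLike.coe_sort_coe]
  have heq := Finset.eq_of_subset_of_card_le hsub hcardle
  have hcmem : c ∈ P.roots.toFinset := Multiset.mem_toFinset.mpr (hroot c hcfix)
  rw [← heq, Set.mem_toFinset] at hcmem
  exact hcmem
end

section
/- With $q, s, \pi$ as before ($GF(s)$ a proper subfield of $GF(q)$ with $s^t = q$, $t > 1$), let $S = \{u(a,b) : a,b \in GF(q)\}$ with multiplication $u(a,b)u(c,d) = u(a+c, c\,\pi(a)+b+d)$, and let $S_1 = \{u(a,b) : a,b \in GF(s)\}$. Then the normalizer of $S_1$ in $S$ equals $\{u(c,d) : c \in GF(s),\ d \in GF(q)\}$, a subgroup of order $s \cdot q$; in particular $N_S(S_1)$ is a proper subgroup of $S$. -/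
open Polynomial in
lemma aux_mem_iff {K : Type*} [Field K] [Finite K] (F : Subfield K) {s : ℕ} (hs : 2 ≤ s)
    (hF : Nat.card F = s) (x : K) : x ∈ F ↔ x ^ s = x := by
  letI : Fintype K := Fintype.ofFinite K
  letI := Classical.decEq K
  letI : Fintype F := Fintype.ofFinite F
  have hfwd : ∀ y : K, y ∈ F → y ^ s = y := by
    intro y hy
    have h1 : (⟨y, hy⟩ : F) ^ Fintype.card F = ⟨y, hy⟩ := FiniteField.pow_card _
    have h2 : Fintype.card F = s := by rw [← Nat.card_eq_fintype_card, hF]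
    rw [h2] at h1
    simpa using congrArg Subtype.val h1
  constructor
  · exact hfwd x
  · intro hx
    set P : K[X] := X ^ s - X with hP
    have hdeg : P.natDegree = s := by
      rw [hP, Polynomial.natDegree_sub_eq_left_of_natDegree_lt, Polynomial.natDegree_X_pow]
      rw [Polynomial.natDegree_X, Polynomial.natDegree_X_pow]; omega
    have hP0 : P ≠ 0 := by
      intro h; rw [h, Polynomial.natDegree_zero] at hdeg; omega
    have hTcard : P.roots.toFinset.card ≤ s := by
      calc P.roots.toFinset.card ≤ Multiset.card P.roots := Multiset.toFinset_card_le _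
        _ ≤ P.natDegree := Polynomial.card_roots' P
        _ = s := hdeg
    have hroot : ∀ y : K, y ^ s = y → y ∈ P.roots.toFinset := by
      intro y hy
      rw [Multiset.mem_toFinset, Polynomial.mem_roots hP0]
      simp [hP, Polynomial.IsRoot, hy, sub_eq_zero]
    have hsub : (F : Set K).toFinset ⊆ P.roots.toFinset := by
      intro y hy
      rw [Set.mem_toFinset] at hy
      exact hroot y (hfwd y hy)
    have hFcard : ((F : Set K).toFinset).card = s := by
      rw [Set.toFinset_card]
      rw [← Nat.card_eq_fintype_card]
      exact hF
    have heq := Finset.eq_of_subset_of_card_le hsub (by rw [hFcard]; exact hTcard)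
    have : x ∈ (F : Set K).toFinset := by rw [heq]; exact hroot x hx
    rwa [Set.mem_toFinset] at this

lemma aux_AS {K : Type*} [Field K] [CharP K 2] (F : Subfield K) {k q t : ℕ}
    (hmem : ∀ x : K, x ∈ F ↔ x ^ 2 ^ k = x) (hq : ∀ x : K, x ^ q = x)
    (hst : (2 ^ k) ^ t = q) (htodd : ¬ 2 ∣ t) {c : K} (hc : c ^ 2 + c ∈ F) : c ∈ F := by
  haveI : Fact (Nat.Prime 2) := ⟨Nat.prime_two⟩
  set s := 2 ^ k with hs
  have h20 : (2 : K) = 0 := CharTwo.two_eq_zero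
  have hcast : ∀ j : ℕ, ((j : K)) ^ s = (j : K) := by
    intro j
    rw [CharP.cast_eq_mod K 2 j]
    rcases Nat.mod_two_eq_zero_or_one j with h | h <;> rw [h]
    · push_cast; exact zero_pow (by positivity)
    · push_cast; exact one_pow _
  have he : (c ^ 2 + c) ^ s = c ^ 2 + c := (hmem _).1 hc
  have hfrob : (c ^ 2 + c) ^ s = (c ^ 2) ^ s + c ^ s := add_pow_char_pow _ _ 2 k
  have hsq : (c ^ s + c) ^ 2 = (c ^ 2) ^ s + c ^ 2 := by rw [CharTwo.add_sq]; ring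
  have hy : (c ^ s + c) * ((c ^ s + c) + 1) = 0 := by
    linear_combination hsq - hfrob + he + (c ^ 2 + c) * h20
  rcases mul_eq_zero.1 hy with h0 | h0
  · have : c ^ s = c := by linear_combination h0 - c * h20
    exact (hmem c).2 this
  · exfalso
    have hy1 : c ^ s = c + 1 := by linear_combination h0 - c * h20 - h20
    have hiter : ∀ j : ℕ, c ^ s ^ j = c + (j : K) := by
      intro j
      induction j with
      | zero => simp
      | succ n ih =>
        have h1 : c ^ s ^ (n + 1) = (c ^ s ^ n) ^ s := by rw [pow_succ, pow_mul]
        rw [h1, ih, hs, add_pow_char_pow, ← hs, hcast, hy1]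
        push_cast
        ring
    have ht := hiter t
    rw [hst, hq] at ht
    have : (t : K) = 0 := by linear_combination -ht
    exact htodd ((CharP.cast_eq_zero_iff K 2 t).1 this)


/-- With `S = {u(a,b) : a,b ∈ GF(q)}` (multiplication
    `u(a,b)u(c,d) = u(a+c, c·π(a)+b+d)`) and `S₁ = {u(a,b) : a,b ∈ GF(s)}` for a
    proper subfield `GF(s)` with `s^t = q`, `t > 1`: the normalizer of `S₁` in `S`
    is exactly `{u(c,d) : c ∈ GF(s), d ∈ GF(q)}`, a subgroup of order `s·q`,
    which is proper in `S`. -/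
theorem stmt5 (m p t : ℕ) (hm : 1 ≤ m) (ht1 : 1 < t) (ht : (2*p+1) * t = 2*m+1)
    (F : Subfield (GaloisField 2 (2*m+1))) (hF : Nat.card F = 2 ^ (2*p+1)) :
    let K := GaloisField 2 (2*m+1)
    let π : K → K := fun x => x ^ (2 ^ (m+1))
    let mul : K × K → K × K → K × K := fun u v => (u.1 + v.1, v.1 * π u.1 + u.2 + v.2)
    let inv : K × K → K × K := fun u => (u.1, u.2 + u.1 * π u.1)
    let S1 : Set (K × K) := {u | u.1 ∈ F ∧ u.2 ∈ F}
    let NS1 : Set (K × K) := {x | ∀ u ∈ S1, mul (mul (inv x) u) x ∈ S1}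
    NS1 = {x : K × K | x.1 ∈ F} ∧
    Nat.card {x : K × K | x.1 ∈ F} = 2 ^ (2*p+1) * 2 ^ (2*m+1) ∧
    NS1 ≠ Set.univ := by
  intro K π mul inv S1 NS1
  haveI : Fact (Nat.Prime 2) := ⟨Nat.prime_two⟩
  have hmul : mul = fun u v => (u.1 + v.1, v.1 * π u.1 + u.2 + v.2) := rfl
  have hinv : inv = fun u => (u.1, u.2 + u.1 * π u.1) := rfl
  have hπ : ∀ x : K, π x = x ^ 2 ^ (m+1) := fun _ => rfl
  have hS1 : S1 = {u : K × K | u.1 ∈ F ∧ u.2 ∈ F} := rfl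
  have hNS1 : NS1 = {x : K × K | ∀ u ∈ S1, mul (mul (inv x) u) x ∈ S1} := rfl
  have hm0 : 2*m+1 ≠ 0 := by omega
  have hcardK : Nat.card K = 2 ^ (2*m+1) := GaloisField.card 2 (2*m+1) hm0
  letI : Fintype K := Fintype.ofFinite K
  have hq : ∀ x : K, x ^ 2 ^ (2*m+1) = x := by
    intro x
    have h := FiniteField.pow_card x
    rwa [← Nat.card_eq_fintype_card, hcardK] at h
  have hmem : ∀ x : K, x ∈ F ↔ x ^ 2 ^ (2*p+1) = x :=
    aux_mem_iff F (by have := Nat.one_lt_two_pow (n := 2*p+1) (by omega); omega) hF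
  have h20 : (2 : K) = 0 := CharTwo.two_eq_zero
  have hπadd : ∀ x y : K, π (x + y) = π x + π y := fun x y => add_pow_char_pow x y 2 (m+1)
  have hπ1 : π (1 : K) = 1 := one_pow _
  have hππ : ∀ x : K, π (π x) = x ^ 2 := by
    intro x
    have h1 : π (π x) = x ^ (2 ^ (m+1) * 2 ^ (m+1)) := by rw [hπ, hπ, ← pow_mul]
    have h2 : 2 ^ (m+1) * 2 ^ (m+1) = 2 ^ (2*m+1) * 2 := by
      rw [← pow_add, ← pow_succ]
      congr 1
      omega
    rw [h1, h2, pow_mul, hq]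
  have hπmem : ∀ x : K, x ∈ F → π x ∈ F := fun x hx => by rw [hπ]; exact F.pow_mem hx _
  have hconj : ∀ c d a b : K,
      mul (mul (inv (c, d)) (a, b)) (c, d) = (a, c * π a + a * π c + b) := by
    intro c d a b
    simp only [hmul, hinv]
    rw [hπadd]
    refine Prod.ext ?_ ?_
    · show c + a + c = a
      linear_combination c * h20
    · show c * (π c + π a) + (a * π c + (d + c * π c) + b) + d = c * π a + a * π c + b
      linear_combination (c * π c + d) * h20
  have hodd : ¬ 2 ∣ t := by
    rintro ⟨r, rfl⟩
    have h : 2*m+1 = 2*((2*p+1)*r) := by rw [← ht]; ring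
    omega
  have hst : (2 ^ (2*p+1)) ^ t = 2 ^ (2*m+1) := by rw [← pow_mul, ht]
  have hkey : ∀ x : K × K, x ∈ NS1 ↔ x.1 ∈ F := by
    rintro ⟨c, d⟩
    rw [hNS1]
    simp only [Set.mem_setOf_eq]
    constructor
    · intro h
      have h1 := h (1, 0) (by rw [hS1]; exact ⟨F.one_mem, F.zero_mem⟩)
      rw [hconj, hS1] at h1
      obtain ⟨-, h1⟩ := h1
      have hcc : c + π c ∈ F := by
        have he : c * π 1 + 1 * π c + 0 = c + π c := by rw [hπ1]; ring
        rwa [he] at h1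
      have hc2 : c ^ 2 + c ∈ F := by
        have hsum := F.add_mem hcc (hπmem _ hcc)
        have he : (c + π c) + π (c + π c) = c ^ 2 + c := by
          rw [hπadd, hππ]
          linear_combination π c * h20
        rwa [he] at hsum
      exact aux_AS F hmem hq hst hodd hc2
    · rintro hc ⟨a, b⟩ hu
      rw [hS1] at hu
      obtain ⟨ha, hb⟩ := hu
      rw [hconj, hS1]
      exact ⟨ha, F.add_mem (F.add_mem (F.mul_mem hc (hπmem _ ha))
        (F.mul_mem ha (hπmem _ hc))) hb⟩
  have hset : NS1 = {x : K × K | x.1 ∈ F} := Set.ext fun x => by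
    rw [Set.mem_setOf_eq]; exact hkey x
  refine ⟨hset, ?_, ?_⟩
  · have e : {x : K × K | x.1 ∈ F} ≃ F × K :=
      { toFun := fun x => (⟨x.1.1, x.2⟩, x.1.2)
        invFun := fun y => ⟨(y.1.1, y.2), y.1.2⟩
        left_inv := fun x => rfl
        right_inv := fun y => rfl }
    rw [Nat.card_congr e, Nat.card_prod, hF, hcardK]
  · intro huniv
    have hall : ∀ c : K, c ∈ F := by
      intro c
      have hmemu : (c, 0) ∈ NS1 := huniv ▸ Set.mem_univ _
      exact (hkey _).1 hmemu
    have hcc : Nat.card F = Nat.card K := Nat.card_congr (Equiv.subtypeUnivEquiv hall)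
    rw [hF, hcardK] at hcc
    have hexp : 2*p+1 = 2*m+1 := Nat.pow_right_injective le_rfl hcc
    have h1 : (2*p+1) * 2 ≤ (2*p+1) * t := Nat.mul_le_mul_left _ ht1
    linarith [ht]
end

section
/- With the group $S = \{u(a,b) : a,b \in GF(q)\}$ and subgroup $S_1 = \{u(a,b): a,b \in GF(s)\}$ as above, the normalizer in $S$ of the coset $Z(S_1)u(1,0)$ (i.e. the set of $x \in S$ with $x^{-1}(Z(S_1)u(1,0))x = Z(S_1)u(1,0)$) equals $\{u(c,d) : c,d \in GF(q),\ c + \pi(c) \in GF(s)\}$, and this set coincides with $N_S(S_1)$. -/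
section Aux

/-- Every element of `GaloisField 2 (2m+1)` is fixed by `x ↦ x^(2^(2m+1))`. -/
lemma stmt6_pow_card (m : ℕ) (x : GaloisField 2 (2*m+1)) : x ^ (2^(2*m+1)) = x := by
  haveI : Fintype (GaloisField 2 (2*m+1)) := Fintype.ofFinite _
  have h := GaloisField.card 2 (2*m+1) (by omega)
  rw [Nat.card_eq_fintype_card] at h
  rw [← h]; exact FiniteField.pow_card x

/-- Membership in the subfield of cardinality `2^(2p+1)` is equivalent to being
fixed by `x ↦ x^(2^(2p+1))`. -/
lemma stmt6_mem_iff (m p : ℕ) (F : Subfield (GaloisField 2 (2*m+1)))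
    (hF : Nat.card F = 2 ^ (2*p+1)) (x : GaloisField 2 (2*m+1)) :
    x ∈ F ↔ x ^ (2^(2*p+1)) = x := by
  classical
  set q : ℕ := 2^(2*p+1) with hq
  have hq1 : 1 < q := Nat.one_lt_two_pow (by omega)
  have fwd : ∀ y : GaloisField 2 (2*m+1), y ∈ F → y ^ q = y := by
    intro y hy
    haveI : Fintype F := Fintype.ofFinite _
    have h : (⟨y, hy⟩ : F) ^ Fintype.card F = ⟨y, hy⟩ := FiniteField.pow_card _
    rw [← Nat.card_eq_fintype_card, hF] at h
    have := congrArg (Subtype.val) h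
    simpa using this
  constructor
  · exact fwd x
  · intro hx
    set P : Polynomial (GaloisField 2 (2*m+1)) := Polynomial.X ^ q - Polynomial.X with hPdef
    set E : Set (GaloisField 2 (2*m+1)) := {y | y ^ q = y} with hE
    have hsub : (F : Set (GaloisField 2 (2*m+1))) ⊆ E := fun y hy => fwd y hy
    have hPne : P ≠ 0 := FiniteField.X_pow_card_sub_X_ne_zero _ hq1
    have hEsub : E ⊆ ↑(P.roots.toFinset) := by
      intro y hy
      rw [Finset.mem_coe, Multiset.mem_toFinset, Polynomial.mem_roots hPne]
      simp only [hPdef, Polynomial.IsRoot, Polynomial.eval_sub, Polynomial.eval_pow,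
        Polynomial.eval_X]
      rw [Set.mem_setOf_eq] at hy
      rw [hy]
      ring
    have hEfin : E.Finite := Set.Finite.subset (P.roots.toFinset : Finset _).finite_toSet hEsub
    have hEcard : E.ncard ≤ q := by
      calc E.ncard ≤ ((P.roots.toFinset : Finset _) : Set (GaloisField 2 (2*m+1))).ncard :=
            Set.ncard_le_ncard hEsub (Finset.finite_toSet _)
        _ = P.roots.toFinset.card := Set.ncard_coe_finset _
        _ ≤ Multiset.card P.roots := Multiset.toFinset_card_le _
        _ ≤ P.natDegree := Polynomial.card_roots' _
        _ = q := FiniteField.X_pow_card_sub_X_natDegree_eq _ hq1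
    have hFcard : (F : Set (GaloisField 2 (2*m+1))).ncard = q := by
      rw [← Nat.card_coe_set_eq]
      simpa using hF
    have hEq : (F : Set (GaloisField 2 (2*m+1))) = E :=
      Set.eq_of_subset_of_ncard_le hsub (by rw [hFcard]; exact hEcard) hEfin
    have hmem : x ∈ E := hx
    rw [← hEq] at hmem
    exact hmem

/-- Auxiliary: powers by odd iterates of `q` collapse when `(c^q)^q = c`. -/
lemma stmt6_odd_pow {K : Type*} [Field K] (c : K) (q : ℕ)
    (h2 : (c ^ q) ^ q = c) : ∀ u : ℕ, c ^ (q ^ (2*u+1)) = c ^ q := by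
  intro u
  induction u with
  | zero => rw [pow_one]
  | succ n ih =>
    have hexp : q ^ (2*(n+1)+1) = q ^ (2*n+1) * q * q := by
      rw [← pow_succ, ← pow_succ]
      congr 1
    rw [hexp, pow_mul, pow_mul, ih, h2]

/-- The subfield lemma: `c + π(c) ∈ F` iff `c ∈ F`. -/
lemma stmt6_subfield_lemma (m p t : ℕ) (hm : 1 ≤ m) (ht1 : 1 < t) (ht : (2*p+1) * t = 2*m+1)
    (F : Subfield (GaloisField 2 (2*m+1)))
    (hF : Nat.card F = 2 ^ (2*p+1)) (c : GaloisField 2 (2*m+1)) :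
    c + c ^ (2^(m+1)) ∈ F ↔ c ∈ F := by
  have h2z : (2 : GaloisField 2 (2*m+1)) = 0 := CharP.cast_eq_zero _ 2
  constructor
  · intro hw
    -- Step 1 : c^2 + c ∈ F
    have hw2 : (c + c ^ (2^(m+1))) ^ (2^(m+1)) ∈ F := pow_mem hw _
    have h1 : (c + c ^ (2^(m+1))) ^ (2^(m+1))
        = c ^ (2^(m+1)) + (c ^ (2^(m+1))) ^ (2^(m+1)) := add_pow_char_pow c _ 2 (m+1)
    have h2 : (c ^ (2^(m+1))) ^ (2^(m+1)) = c ^ 2 := by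
      rw [← pow_mul]
      have he : 2^(m+1) * 2^(m+1) = 2^(2*m+1) * 2 := by
        rw [← pow_add, ← pow_succ]
        congr 1
        omega
      rw [he, pow_mul, stmt6_pow_card m c]
    have he : c ^ 2 + c ∈ F := by
      have hsum := add_mem hw hw2
      have hkey : (c + c ^ (2^(m+1))) + (c + c ^ (2^(m+1))) ^ (2^(m+1)) = c ^ 2 + c := by
        rw [h1, h2]
        linear_combination (c ^ (2^(m+1))) * h2z
      rwa [hkey] at hsum
    -- Step 2 : (c^q + c)^2 = c^q + c  where q = 2^(2p+1)
    have heq : (c ^ 2 + c) ^ (2^(2*p+1)) = c ^ 2 + c := (stmt6_mem_iff m p F hF _).mp he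
    have heq' : (c ^ (2^(2*p+1))) ^ 2 + c ^ (2^(2*p+1)) = c ^ 2 + c := by
      have h3 : (c ^ 2 + c) ^ (2^(2*p+1)) = (c ^ 2) ^ (2^(2*p+1)) + c ^ (2^(2*p+1)) :=
        add_pow_char_pow _ _ 2 (2*p+1)
      have h4 : (c ^ 2) ^ (2^(2*p+1)) = (c ^ (2^(2*p+1))) ^ 2 := by
        rw [← pow_mul, Nat.mul_comm 2 (2^(2*p+1)), pow_mul]
      rw [h3, h4] at heq
      exact heq
    have hd : (c ^ (2^(2*p+1)) + c) * ((c ^ (2^(2*p+1)) + c) - 1) = 0 := by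
      linear_combination heq' + (c ^ 2 + (c ^ (2^(2*p+1))) * c - c ^ (2^(2*p+1))) * h2z
    rcases mul_eq_zero.mp hd with h0 | h1'
    · -- c^q = c, so c ∈ F
      have hfix : c ^ (2^(2*p+1)) = c := by linear_combination h0 - c * h2z
      exact (stmt6_mem_iff m p F hF c).mpr hfix
    · -- c^q = c + 1 : impossible since t is odd
      exfalso
      have hq1 : c ^ (2^(2*p+1)) = c + 1 := by linear_combination h1' - c * h2z
      have h2step : (c ^ (2^(2*p+1))) ^ (2^(2*p+1)) = c := by
        rw [hq1]
        have hh2 : (c + 1 : GaloisField 2 (2*m+1)) ^ (2^(2*p+1))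
            = c ^ (2^(2*p+1)) + 1 ^ (2^(2*p+1)) := add_pow_char_pow _ _ 2 (2*p+1)
        rw [hh2, hq1, one_pow]
        linear_combination h2z
      -- t is odd
      have hodd : Odd t := by
        have hoddm : Odd ((2*p+1) * t) := by
          rw [ht]
          exact ⟨m, by omega⟩
        exact (Nat.odd_mul.mp hoddm).2
      obtain ⟨u, hu⟩ := hodd
      have hqt : c ^ ((2^(2*p+1))^t) = c ^ (2^(2*p+1)) := by
        rw [hu]
        exact stmt6_odd_pow c (2^(2*p+1)) h2step u
      have hqt2 : c ^ ((2^(2*p+1))^t) = c := by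
        have hqq : (2^(2*p+1))^t = 2^(2*m+1) := by rw [← pow_mul, ht]
        rw [hqq]
        exact stmt6_pow_card m c
      rw [hqt2, hq1] at hqt
      have hzo : (1 : GaloisField 2 (2*m+1)) = 0 := by linear_combination -hqt
      exact one_ne_zero hzo
  · intro hc
    exact add_mem hc (pow_mem hc _)

end Aux

/-- With `S`, `S₁` as before, the normalizer in `S` of the coset
    `Z(S₁)u(1,0) = {u(1,b) : b ∈ GF(s)}` equals
    `{u(c,d) : c,d ∈ GF(q), c + π(c) ∈ GF(s)}`, and this set coincides with
    the normalizer `N_S(S₁)`. -/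
theorem stmt6 (m p t : ℕ) (hm : 1 ≤ m) (ht1 : 1 < t) (ht : (2*p+1) * t = 2*m+1)
    (F : Subfield (GaloisField 2 (2*m+1))) (hF : Nat.card F = 2 ^ (2*p+1)) :
    let K := GaloisField 2 (2*m+1)
    let π : K → K := fun x => x ^ (2 ^ (m+1))
    let mul : K × K → K × K → K × K := fun u v => (u.1 + v.1, v.1 * π u.1 + u.2 + v.2)
    let inv : K × K → K × K := fun u => (u.1, u.2 + u.1 * π u.1)
    let S1 : Set (K × K) := {u | u.1 ∈ F ∧ u.2 ∈ F}
    let coset : Set (K × K) := {u | u.1 = 1 ∧ u.2 ∈ F}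
    let Ncoset : Set (K × K) := {x | ∀ u ∈ coset, mul (mul (inv x) u) x ∈ coset}
    let NS1 : Set (K × K) := {x | ∀ u ∈ S1, mul (mul (inv x) u) x ∈ S1}
    Ncoset = {x : K × K | x.1 + π x.1 ∈ F} ∧
    Ncoset = NS1 := by
  intro K π mul inv S1 coset Ncoset NS1
  have h2z : (2 : K) = 0 := CharP.cast_eq_zero K 2
  have hπ1 : π (1 : K) = 1 := by simp [π]
  -- elementary identities used after unfolding the group operation
  have hfst : ∀ cc a : K, cc + a + cc = a := by
    intro cc a; linear_combination cc * h2z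
  have hsnd : ∀ cc dd a b : K,
      cc * π (cc + a) + (a * π cc + (dd + cc * π cc) + b) + dd
        = b + cc * π a + a * π cc := by
    intro cc dd a b
    simp only [π]
    rw [add_pow_char_pow cc a 2 (m+1)]
    linear_combination (cc * cc ^ (2^(m+1)) + dd) * h2z
  -- First : Ncoset = {x | x.1 + π x.1 ∈ F}
  have hN : Ncoset = {x : K × K | x.1 + π x.1 ∈ F} := by
    ext x
    obtain ⟨cc, dd⟩ := x
    simp only [Ncoset, coset, mul, inv, Set.mem_setOf_eq, Prod.forall]
    constructor
    · intro h
      obtain ⟨-, h2⟩ := h 1 0 ⟨rfl, zero_mem F⟩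
      rw [hsnd cc dd 1 0] at h2
      simpa [hπ1] using h2
    · rintro hc a b ⟨ha, hb⟩
      subst ha
      refine ⟨hfst cc 1, ?_⟩
      rw [hsnd cc dd 1 b]
      simp only [hπ1, mul_one, one_mul]
      rw [add_assoc]
      exact add_mem hb hc
  refine ⟨hN, ?_⟩
  -- Second : Ncoset = NS1
  rw [hN]
  ext x
  obtain ⟨cc, dd⟩ := x
  simp only [NS1, S1, mul, inv, Set.mem_setOf_eq, Prod.forall]
  constructor
  · rintro hc a b ⟨ha, hb⟩
    have hccF : cc ∈ F := (stmt6_subfield_lemma m p t hm ht1 ht F hF cc).mp hc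
    rw [hfst cc a, hsnd cc dd a b]
    refine ⟨ha, ?_⟩
    have hπa : π a ∈ F := pow_mem ha _
    have hπc : π cc ∈ F := pow_mem hccF _
    exact add_mem (add_mem hb (mul_mem hccF hπa)) (mul_mem ha hπc)
  · intro h
    obtain ⟨-, h2⟩ := h 1 0 ⟨one_mem F, zero_mem F⟩
    rw [hsnd cc dd 1 0] at h2
    simpa [hπ1] using h2
end
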